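/- Let K : [0,∞) → [0,∞), M > 0 and C > 0 satisfy K(ρ₁) + K(ρ₂) ≥ K(ρ₁+ρ₂) + C·ρ₁·ρ₂ for all ρ₁, ρ₂ ≥ 0 with ρ₁ + ρ₂ ≤ M. Let α < β be real numbers, let λ > 0, and assume C* := C − (β−α)·λ/2 > 0. Let g : [α,β] → ℝ be continuous and nondecreasing with ρ := g(β) − g(α) ≤ M, let δ ∈ (0,1), let γ ∈ [α,β] be a point with g(γ) = (g(α)+g(β))/2, and let U₀ : [α,β] → ℝ be the step function with U₀(x) = g(α) for x ∈ [α,γ) and U₀(x) = g(β) for x ∈ [γ,β]. Then, for every pair x₁, x₂ with α ≤ x₁ ≤ x₂ ≤ β and v : [α,β] → ℝ defined by v(x) = g(α) for x ∈ [α,x₁), v(x) = g(α) + δρ for x ∈ [x₁,x₂), v(x) = g(β) for x ∈ [x₂,β], one has K(δρ) + K((1−δ)ρ) + (λ/2)·∫_α^β (v(x) − g(x))² dx ≥ K(ρ) + (λ/2)·∫_α^β (U₀(x) − g(x))² dx + C*·δ(1−δ)·ρ². -/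
import Mathlib

open MeasureTheory

lemma sq_sub_intervalIntegrable (α β : ℝ) (hαβ : α ≤ β) (g w : ℝ → ℝ)
    (hg : ContinuousOn g (Set.Icc α β)) (hw : Measurable w) (B : ℝ)
    (hB : ∀ x ∈ Set.Icc α β, |w x - g x| ≤ B) :
    IntervalIntegrable (fun x => (w x - g x) ^ 2) MeasureTheory.volume α β := by
  rw [intervalIntegrable_iff_integrableOn_Ioc_of_le hαβ]
  have hgm : AEStronglyMeasurable g (volume.restrict (Set.Ioc α β)) :=
    (hg.aestronglyMeasurable measurableSet_Icc).mono_measure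
      (Measure.restrict_mono Set.Ioc_subset_Icc_self le_rfl)
  have hmeas : AEStronglyMeasurable (fun x => (w x - g x) ^ 2)
      (volume.restrict (Set.Ioc α β)) :=
    ((hw.aestronglyMeasurable.restrict).sub hgm).pow 2
  refine ⟨hmeas, HasFiniteIntegral.restrict_of_bounded (C := B ^ 2) measure_Ioc_lt_top ?_⟩
  filter_upwards [ae_restrict_mem measurableSet_Ioc] with x hx
  have h := hB x (Set.Ioc_subset_Icc_self hx)
  have : |w x - g x| ^ 2 ≤ B ^ 2 := pow_le_pow_left₀ (abs_nonneg _) h 2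
  simpa [Real.norm_eq_abs, abs_pow, sq_abs] using this

set_option maxHeartbeats 1000000 in
/-- Quantitative energy comparison (Lemma on two-jump competitors): under (K2) at level
`M` with constant `C`, for nondecreasing continuous data `g` with `ρ = g(β)-g(α) ≤ M`
and `C* = C - (β-α)λ/2 > 0`, the total energy `TV_{Kg}` of any nondecreasing two-jump
competitor `v` with middle value `g(α)+δρ` exceeds that of the optimal one-jump step
function `U₀` by at least `C*·δ(1-δ)ρ²`. -/
theorem energy_two_jump_excess (K : ℝ → ℝ) (M C : ℝ) (hM : 0 < M) (hC : 0 < C)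
    (hK2 : ∀ ρ₁ ρ₂ : ℝ, 0 ≤ ρ₁ → 0 ≤ ρ₂ → ρ₁ + ρ₂ ≤ M →
      K ρ₁ + K ρ₂ ≥ K (ρ₁ + ρ₂) + C * ρ₁ * ρ₂)
    (α β lam : ℝ) (hαβ : α < β) (hlam : 0 < lam)
    (hCstar : 0 < C - (β - α) * lam / 2)
    (g : ℝ → ℝ) (hg : ContinuousOn g (Set.Icc α β)) (hmono : MonotoneOn g (Set.Icc α β))
    (ρ : ℝ) (hρdef : ρ = g β - g α) (hρM : ρ ≤ M)
    (δ : ℝ) (hδ : δ ∈ Set.Ioo (0 : ℝ) 1)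
    (γ : ℝ) (hγ : γ ∈ Set.Icc α β) (hmid : g γ = (g α + g β) / 2)
    (U₀ : ℝ → ℝ) (hU₀ : ∀ x, U₀ x = if x < γ then g α else g β)
    (x₁ x₂ : ℝ) (hx₁ : α ≤ x₁) (hx₁₂ : x₁ ≤ x₂) (hx₂ : x₂ ≤ β)
    (v : ℝ → ℝ)
    (hv : ∀ x, v x = if x < x₁ then g α else if x < x₂ then g α + δ * ρ else g β) :
    K (δ * ρ) + K ((1 - δ) * ρ) + lam / 2 * ∫ x in α..β, (v x - g x) ^ 2
      ≥ K ρ + lam / 2 * (∫ x in α..β, (U₀ x - g x) ^ 2)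
          + (C - (β - α) * lam / 2) * (δ * (1 - δ)) * ρ ^ 2 := by
  obtain ⟨hδ0, hδ1⟩ := hδ
  have hmemα : α ∈ Set.Icc α β := ⟨le_rfl, hαβ.le⟩
  have hmemβ : β ∈ Set.Icc α β := ⟨hαβ.le, le_rfl⟩
  have hρ0 : 0 ≤ ρ := by rw [hρdef]; linarith [hmono hmemα hmemβ hαβ.le]
  -- K part
  have hKpart : K (δ * ρ) + K ((1 - δ) * ρ) ≥ K ρ + C * (δ * ρ) * ((1 - δ) * ρ) := by
    have h := hK2 (δ * ρ) ((1 - δ) * ρ)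
      (mul_nonneg hδ0.le hρ0) (mul_nonneg (by linarith) hρ0)
      (by nlinarith)
    have hsum : δ * ρ + (1 - δ) * ρ = ρ := by ring
    rw [hsum] at h
    exact h
  -- pointwise bound
  have key : ∀ x ∈ Set.Icc α β,
      (U₀ x - g x) ^ 2 ≤ (v x - g x) ^ 2 + δ * (1 - δ) * ρ ^ 2 := by
    intro x hx
    subst hρdef
    have h1 : g α ≤ g x := hmono hmemα hx hx.1
    have h2 : g x ≤ g β := hmono hx hmemβ hx.2
    have hδρ : (0:ℝ) ≤ δ * (1 - δ) * (g β - g α) ^ 2 :=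
      mul_nonneg (mul_nonneg hδ0.le (by linarith)) (sq_nonneg _)
    rw [hU₀, hv]
    by_cases hγx : x < γ
    · have hle : g x ≤ (g α + g β) / 2 := hmid ▸ hmono hx hγ hγx.le
      simp only [if_pos hγx]
      split_ifs with h3 h4
      · nlinarith [hδρ]
      · nlinarith [hδρ, mul_nonneg (mul_nonneg hδ0.le hρ0)
          (show (0:ℝ) ≤ g α + g β - 2 * g x by linarith)]
      · nlinarith [hδρ, mul_nonneg hρ0 (show (0:ℝ) ≤ g α + g β - 2 * g x by linarith)]
    · have hge : (g α + g β) / 2 ≤ g x := hmid ▸ hmono hγ hx (not_lt.1 hγx)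
      simp only [if_neg hγx]
      split_ifs with h3 h4
      · nlinarith [hδρ, mul_nonneg hρ0 (show (0:ℝ) ≤ 2 * g x - g α - g β by linarith)]
      · nlinarith [hδρ, mul_nonneg (mul_nonneg (show (0:ℝ) ≤ 1 - δ by linarith) hρ0)
          (show (0:ℝ) ≤ 2 * g x - g α - g β by linarith)]
      · nlinarith [hδρ]
  -- integrability
  have hUfun : U₀ = fun x => if x < γ then g α else g β := funext hU₀
  have hvfun : v = fun x => if x < x₁ then g α else if x < x₂ then g α + δ * ρ else g β :=
    funext hv
  have hUm : Measurable U₀ := by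
    rw [hUfun]
    exact Measurable.ite (measurableSet_lt measurable_id measurable_const)
      measurable_const measurable_const
  have hvm : Measurable v := by
    rw [hvfun]
    exact Measurable.ite (measurableSet_lt measurable_id measurable_const)
      measurable_const (Measurable.ite (measurableSet_lt measurable_id measurable_const)
        measurable_const measurable_const)
  have hUB : ∀ x ∈ Set.Icc α β, |U₀ x - g x| ≤ ρ := by
    intro x hx
    have h1 : g α ≤ g x := hmono hmemα hx hx.1
    have h2 : g x ≤ g β := hmono hx hmemβ hx.2
    rw [hU₀, abs_le]
    split_ifs <;> constructor <;> linarith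
  have hvB : ∀ x ∈ Set.Icc α β, |v x - g x| ≤ ρ := by
    intro x hx
    have h1 : g α ≤ g x := hmono hmemα hx hx.1
    have h2 : g x ≤ g β := hmono hx hmemβ hx.2
    rw [hv, abs_le]
    have ha : 0 ≤ δ * ρ := mul_nonneg hδ0.le hρ0
    have hb : 0 ≤ (1 - δ) * ρ := mul_nonneg (by linarith) hρ0
    split_ifs <;> constructor <;> nlinarith [ha, hb]
  have hUint : IntervalIntegrable (fun x => (U₀ x - g x) ^ 2) volume α β :=
    sq_sub_intervalIntegrable α β hαβ.le g U₀ hg hUm ρ hUB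
  have hvint : IntervalIntegrable (fun x => (v x - g x) ^ 2) volume α β :=
    sq_sub_intervalIntegrable α β hαβ.le g v hg hvm ρ hvB
  -- integral comparison
  have hintle : (∫ x in α..β, (U₀ x - g x) ^ 2)
      ≤ (∫ x in α..β, (v x - g x) ^ 2) + (β - α) * (δ * (1 - δ) * ρ ^ 2) := by
    have h := intervalIntegral.integral_mono_on hαβ.le hUint
      (hvint.add (intervalIntegrable_const (c := δ * (1 - δ) * ρ ^ 2))) key
    rw [intervalIntegral.integral_add hvint intervalIntegrable_const,
      intervalIntegral.integral_const, smul_eq_mul] at h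
    linarith
  nlinarith [mul_le_mul_of_nonneg_left hintle (by linarith : (0:ℝ) ≤ lam / 2)]
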